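/- The plane {(a, (a+c)/√2, c) : a, c ∈ ℝ}, i.e. the set where z₂ = (z₁ + z₃)/√2, is an invariant manifold of the three-dimensional linear model: for all γ₁, γ₂ > 0, if z = (z₁, z₂, z₃) solves the three-dimensional linear model and z₂(t₀) = (z₁(t₀) + z₃(t₀))/√2 for some t₀, then z₂(t) = (z₁(t) + z₃(t))/√2 for all t ∈ ℝ. -/

import Mathlib

open Real

/-- The plane z₂ = (z₁ + z₃)/√2 is an invariant manifold of the
three-dimensional linear model. -/
theorem stmt13 (γ₁ γ₂ : ℝ) (hγ₁ : 0 < γ₁) (hγ₂ : 0 < γ₂) (z₁ z₂ z₃ : ℝ → ℝ)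
    (hz : ∀ t : ℝ,
      HasDerivAt z₁
        ((-1 - γ₁ / 4 - γ₂ / 2) * z₁ t + (Real.sqrt 2 * γ₁ / 4) * z₂ t
          + (γ₂ / 2 - γ₁ / 4) * z₃ t) t ∧
      HasDerivAt z₂
        ((Real.sqrt 2 * γ₁ / 4) * z₁ t - (1 + γ₁ / 2) * z₂ t
          + (Real.sqrt 2 * γ₁ / 4) * z₃ t) t ∧
      HasDerivAt z₃
        ((-γ₁ / 4 + γ₂ / 2) * z₁ t + (Real.sqrt 2 * γ₁ / 4) * z₂ t
          - (1 + γ₁ / 4 + γ₂ / 2) * z₃ t) t)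
    (t₀ : ℝ) (h₀ : z₂ t₀ = (z₁ t₀ + z₃ t₀) / Real.sqrt 2) :
    ∀ t : ℝ, z₂ t = (z₁ t + z₃ t) / Real.sqrt 2 := by
  have hs2 : Real.sqrt 2 * Real.sqrt 2 = 2 := Real.mul_self_sqrt (by norm_num)
  have hs2pos : (0:ℝ) < Real.sqrt 2 := Real.sqrt_pos.mpr (by norm_num)
  set w : ℝ → ℝ := fun t => z₂ t - (z₁ t + z₃ t) / Real.sqrt 2 with hw
  have hwderiv : ∀ t, HasDerivAt w (-(1 + γ₁) * w t) t := by
    intro t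
    obtain ⟨h1, h2, h3⟩ := hz t
    have := h2.sub (((h1.add h3).div_const (Real.sqrt 2)))
    refine this.congr_deriv ?_; symm
    have hsq : Real.sqrt 2 ^ 2 = 2 := Real.sq_sqrt (by norm_num)
    field_simp [hw]
    have hwt : w t * Real.sqrt 2 = z₂ t * Real.sqrt 2 - (z₁ t + z₃ t) := by
      show (z₂ t - (z₁ t + z₃ t) / Real.sqrt 2) * Real.sqrt 2 = _
      rw [sub_mul, div_mul_cancel₀ _ hs2pos.ne']
    linear_combination (-8 * (1 + γ₁)) * hwt + (-2 * γ₁ * (z₁ t + z₃ t)) * hsq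
  have hf : ∀ t, HasDerivAt (fun t => w t * Real.exp ((1 + γ₁) * t)) 0 t := by
    intro t
    have he : HasDerivAt (fun t : ℝ => Real.exp ((1 + γ₁) * t))
        ((1 + γ₁) * Real.exp ((1 + γ₁) * t)) t := by
      have := ((hasDerivAt_id t).const_mul (1 + γ₁)).exp
      simpa [mul_comm] using this
    have := (hwderiv t).mul he
    refine this.congr_deriv ?_; symm
    ring
  have hconst : ∀ t, w t * Real.exp ((1 + γ₁) * t)
      = w t₀ * Real.exp ((1 + γ₁) * t₀) := by
    intro t
    have := is_const_of_deriv_eq_zero (f := fun t => w t * Real.exp ((1 + γ₁) * t))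
      (fun x => (hf x).differentiableAt) (fun x => (hf x).deriv) t t₀
    exact this
  intro t
  have h0 : w t₀ = 0 := by simp [hw, h₀]
  have := hconst t
  rw [h0, zero_mul] at this
  have hwt : w t = 0 := by
    have h := mul_eq_zero.mp this
    rcases h with h | h
    · exact h
    · exact absurd h (Real.exp_ne_zero _)
  have : z₂ t - (z₁ t + z₃ t) / Real.sqrt 2 = 0 := hwt
  linarith
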